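/- Let s ∈ (1/2, 3/2), p₀ > 0 and q₀ ∈ (0, 1/4), and let v₀ be the function v₀(x) = p₀q₀eˣ for x < -q₀, v₀(x) = -p₀e^{-q₀}x for |x| ≤ q₀, v₀(x) = -p₀q₀e^{-x} for x > q₀. Then there exists a constant C = C(s) > 0, independent of p₀ and q₀, such that C⁻¹ p₀ q₀^{3/2−s} ≤ ‖v₀‖_{H^s(ℝ)} ≤ C p₀ q₀^{3/2−s}. -/

import Mathlib

open Real MeasureTheory Set

/-- The anti-symmetric peakon-antipeakon profile. -/
noncomputable def v0 (p q : ℝ) : ℝ → ℝ := fun x =>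
  if x < -q then p * q * Real.exp x
  else if x ≤ q then -p * Real.exp (-q) * x
  else -p * q * Real.exp (-x)

/-- Fourier transform with the convention `f̂(ξ) = ∫ e^{-ixξ} f(x) dx`. -/
noncomputable def fourierT (f : ℝ → ℝ) (ξ : ℝ) : ℂ :=
  ∫ x : ℝ, Complex.exp (-Complex.I * x * ξ) * (f x : ℂ)

/-- The inhomogeneous Sobolev norm `‖f‖_{H^s} = ‖f‖_{L²} + ‖|ξ|^s f̂‖_{L²}` (up to a constant). -/
noncomputable def HsNorm (s : ℝ) (f : ℝ → ℝ) : ℝ :=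
  Real.sqrt (∫ x : ℝ, f x ^ 2) +
    Real.sqrt (∫ ξ : ℝ, |ξ| ^ (2 * s) * ‖fourierT f ξ‖ ^ 2)




noncomputable def FF (q ξ : ℝ) : ℝ :=
  Real.sin (q*ξ) * (1/ξ^2 + q/(1+ξ^2)) - q * Real.cos (q*ξ) / (ξ*(1+ξ^2))

lemma FF_odd (q ξ : ℝ) : FF q (-ξ) = - FF q ξ := by
  unfold FF
  rw [mul_neg, Real.sin_neg, Real.cos_neg, neg_sq,
    show (-ξ*(1+ξ^2)) = -(ξ*(1+ξ^2)) by ring, div_neg]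
  ring

lemma v0_odd (p q : ℝ) (hq : 0 < q) (x : ℝ) : v0 p q (-x) = - v0 p q x := by
  unfold v0
  split_ifs with h1 h2 h3 h4 h5 h6 h7 h8 <;>
    first
      | (exfalso; linarith)
      | ring
      | (rw [neg_neg]; ring)

lemma v0_measurable (p q : ℝ) : Measurable (v0 p q) := by
  unfold v0
  apply Measurable.ite (measurableSet_lt measurable_id measurable_const)
  · fun_prop
  · apply Measurable.ite (measurableSet_le measurable_id measurable_const) <;> fun_prop

lemma v0_abs_le (p q : ℝ) (hp : 0 < p) (hq0 : 0 < q) (hq : q < 1/4) (x : ℝ) :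
    |v0 p q x| ≤ 2*p*q*Real.exp (-|x|) := by
  have hpq : 0 < p * q := mul_pos hp hq0
  unfold v0
  split_ifs with h1 h2
  · have hx : x < 0 := by linarith
    rw [abs_of_neg hx, neg_neg, abs_of_pos (by positivity)]
    nlinarith [Real.exp_pos x, mul_pos hpq (Real.exp_pos x)]
  · have hax : |x| ≤ q := abs_le.2 ⟨by linarith, h2⟩
    have h1 : |(-p * Real.exp (-q) * x)| = p * Real.exp (-q) * |x| := by
      rw [abs_mul, abs_mul, abs_neg, abs_of_pos hp, abs_of_pos (Real.exp_pos _)]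
    rw [h1]
    have he : Real.exp (-q) ≤ 1 := Real.exp_le_one_iff.2 (by linarith)
    have e1 : p * Real.exp (-q) * |x| ≤ p * |x| := by
      have := mul_le_mul_of_nonneg_right he (abs_nonneg x)
      nlinarith
    have e2 : p * |x| ≤ p * q := by nlinarith
    have h3 : (3:ℝ)/4 ≤ Real.exp (-|x|) := by
      have := Real.add_one_le_exp (-|x|)
      have hax4 : |x| ≤ 1/4 := by linarith
      linarith
    nlinarith [mul_pos hp hq0]
  · have hx : 0 < x := by linarith
    rw [abs_of_pos hx]
    have h1 : |(-p * q * Real.exp (-x))| = p * q * Real.exp (-x) := by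
      rw [abs_mul, abs_mul, abs_neg, abs_of_pos hp, abs_of_pos hq0,
        abs_of_pos (Real.exp_pos _)]
    rw [h1]
    nlinarith [mul_pos hpq (Real.exp_pos (-x))]


-- exp(-|x|) is integrable on ℝ
lemma integrable_exp_neg_abs : Integrable (fun x : ℝ => Real.exp (-|x|)) := by
  rw [← integrableOn_univ, ← Set.Iic_union_Ioi (a := (0:ℝ))]
  apply IntegrableOn.union
  · apply (integrableOn_exp_Iic (0:ℝ)).congr_fun _ measurableSet_Iic
    intro x hx
    simp only [Set.mem_Iic] at hx
    simp only []
    rw [abs_of_nonpos hx, neg_neg]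
  · apply ((exp_neg_integrableOn_Ioi (0:ℝ) one_pos)).congr_fun _ measurableSet_Ioi
    intro x hx
    simp only [Set.mem_Ioi] at hx
    simp only []
    rw [abs_of_pos hx]; norm_num

example : (∫ x : ℝ, Real.exp (-|x|)) = 2 := by
  rw [integral_comp_abs (f := fun t => Real.exp (-t))]
  rw [integral_exp_neg_Ioi_zero]; norm_num


lemma trig_comb_bound (ξ y : ℝ) : |Real.sin y - ξ * Real.cos y| ≤ 1 + |ξ| := by
  calc |Real.sin y - ξ * Real.cos y| ≤ |Real.sin y| + |ξ * Real.cos y| := abs_sub _ _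
    _ ≤ 1 + |ξ| := by
        rw [abs_mul]
        have h1 : |Real.sin y| ≤ 1 := abs_le.2 ⟨Real.neg_one_le_sin y, Real.sin_le_one y⟩
        have h2 : |Real.cos y| ≤ 1 := abs_le.2 ⟨Real.neg_one_le_cos y, Real.cos_le_one y⟩
        nlinarith [abs_nonneg ξ, abs_nonneg (Real.cos y)]

lemma trig_comb_bound' (ξ y : ℝ) : |Real.sin y + ξ * Real.cos y| ≤ 1 + |ξ| := by
  have := trig_comb_bound (-ξ) y
  rw [abs_neg] at this
  simpa [sub_neg_eq_add, neg_mul] using this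

lemma piece1 (c q ξ : ℝ) :
    ∫ x in Iic (-q), c * Real.exp x * Real.sin (x*ξ)
      = c * Real.exp (-q) * (Real.sin (-q*ξ) - ξ*Real.cos (-q*ξ))/(1+ξ^2) := by
  have hξ2 : (0:ℝ) < 1 + ξ^2 := by positivity
  set φ : ℝ → ℝ := fun x => c * Real.exp x * (Real.sin (x*ξ) - ξ*Real.cos (x*ξ))/(1+ξ^2)
    with hφ
  have hderiv : ∀ x : ℝ, HasDerivAt φ (c * Real.exp x * Real.sin (x*ξ)) x := by
    intro x
    have hid : HasDerivAt (fun y : ℝ => y * ξ) ξ x := by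
      simpa using (hasDerivAt_id x).mul_const ξ
    have hsin : HasDerivAt (fun y : ℝ => Real.sin (y*ξ)) (Real.cos (x*ξ) * ξ) x :=
      hid.sin
    have hcos : HasDerivAt (fun y : ℝ => Real.cos (y*ξ)) (-Real.sin (x*ξ) * ξ) x :=
      hid.cos
    have h1 : HasDerivAt (fun y : ℝ => Real.sin (y*ξ) - ξ*Real.cos (y*ξ))
        (Real.cos (x*ξ) * ξ - ξ * (-Real.sin (x*ξ) * ξ)) x := hsin.sub (hcos.const_mul ξ)
    have h2 := ((Real.hasDerivAt_exp x).const_mul c).mul h1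
    have h3 := h2.div_const (1+ξ^2)
    refine HasDerivAt.congr_deriv h3 ?_
    field_simp
    ring
  have hint : IntegrableOn (fun x => c * Real.exp x * Real.sin (x*ξ)) (Iic (-q)) := by
    apply Integrable.mono' ((integrableOn_exp_Iic (-q)).const_mul |c|)
    · exact (Continuous.aestronglyMeasurable (by fun_prop)).restrict
    · filter_upwards with x
      rw [Real.norm_eq_abs, abs_mul, abs_mul, Real.abs_exp]
      have h1 : |Real.sin (x*ξ)| ≤ 1 := abs_le.2 ⟨Real.neg_one_le_sin _, Real.sin_le_one _⟩
      have h2 := mul_le_mul_of_nonneg_left h1 (by positivity : (0:ℝ) ≤ |c| * Real.exp x)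
      calc |c| * Real.exp x * |Real.sin (x*ξ)| ≤ |c| * Real.exp x * 1 := h2
        _ = |c| * Real.exp x := by ring
  have htend : Filter.Tendsto φ Filter.atBot (nhds 0) := by
    apply squeeze_zero_norm (a := fun x => (|c| * (1+|ξ|)/(1+ξ^2)) * Real.exp x)
    · intro x
      rw [hφ, Real.norm_eq_abs, abs_div, abs_of_pos hξ2, abs_mul, abs_mul, Real.abs_exp,
        div_le_iff₀ hξ2]
      have h1 := trig_comb_bound ξ (x*ξ)
      have h2 : (0:ℝ) ≤ |c| * Real.exp x := by positivity
      calc |c| * Real.exp x * |Real.sin (x*ξ) - ξ*Real.cos (x*ξ)|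
          ≤ |c| * Real.exp x * (1+|ξ|) := by nlinarith
        _ = |c| * (1+|ξ|)/(1+ξ^2) * Real.exp x * (1+ξ^2) := by field_simp
    · have := Real.tendsto_exp_atBot.const_mul (|c| * (1+|ξ|)/(1+ξ^2))
      simpa using this
  have := integral_Iic_of_hasDerivAt_of_tendsto
    ((hderiv (-q)).continuousAt.continuousWithinAt)
    (fun x _ => hderiv x) hint htend
  rw [this, hφ]
  simp only []
  simp [Real.sin_neg, Real.cos_neg]
  try ring

lemma piece3 (c q ξ : ℝ) :
    ∫ x in Ioi q, c * Real.exp (-x) * Real.sin (x*ξ)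
      = c * Real.exp (-q) * (Real.sin (q*ξ) + ξ*Real.cos (q*ξ))/(1+ξ^2) := by
  have hξ2 : (0:ℝ) < 1 + ξ^2 := by positivity
  set φ : ℝ → ℝ := fun x => -c * Real.exp (-x) * (Real.sin (x*ξ) + ξ*Real.cos (x*ξ))/(1+ξ^2)
    with hφ
  have hderiv : ∀ x : ℝ, HasDerivAt φ (c * Real.exp (-x) * Real.sin (x*ξ)) x := by
    intro x
    have hid : HasDerivAt (fun y : ℝ => y * ξ) ξ x := by
      simpa using (hasDerivAt_id x).mul_const ξ
    have hsin : HasDerivAt (fun y : ℝ => Real.sin (y*ξ)) (Real.cos (x*ξ) * ξ) x :=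
      hid.sin
    have hcos : HasDerivAt (fun y : ℝ => Real.cos (y*ξ)) (-Real.sin (x*ξ) * ξ) x :=
      hid.cos
    have hexp : HasDerivAt (fun y : ℝ => Real.exp (-y)) (-Real.exp (-x)) x := by
      simpa using (hasDerivAt_neg x).exp
    have h1 : HasDerivAt (fun y : ℝ => Real.sin (y*ξ) + ξ*Real.cos (y*ξ))
        (Real.cos (x*ξ) * ξ + ξ * (-Real.sin (x*ξ) * ξ)) x := hsin.add (hcos.const_mul ξ)
    have h2 := ((hexp.const_mul (-c)).mul h1).div_const (1+ξ^2)
    refine HasDerivAt.congr_deriv h2 ?_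
    field_simp
    ring
  have hint : IntegrableOn (fun x => c * Real.exp (-x) * Real.sin (x*ξ)) (Ioi q) := by
    apply Integrable.mono' ((exp_neg_integrableOn_Ioi q one_pos).const_mul |c|)
    · exact (Continuous.aestronglyMeasurable (by fun_prop)).restrict
    · filter_upwards with x
      rw [Real.norm_eq_abs, abs_mul, abs_mul, Real.abs_exp]
      have h1 : |Real.sin (x*ξ)| ≤ 1 := abs_le.2 ⟨Real.neg_one_le_sin _, Real.sin_le_one _⟩
      have h2 := mul_le_mul_of_nonneg_left h1 (by positivity : (0:ℝ) ≤ |c| * Real.exp (-x))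
      calc |c| * Real.exp (-x) * |Real.sin (x*ξ)| ≤ |c| * Real.exp (-x) := by linarith
        _ = |c| * Real.exp (-1*x) := by norm_num
  have htend : Filter.Tendsto φ Filter.atTop (nhds 0) := by
    apply squeeze_zero_norm (a := fun x => (|c| * (1+|ξ|)/(1+ξ^2)) * Real.exp (-x))
    · intro x
      rw [hφ, Real.norm_eq_abs, abs_div, abs_of_pos hξ2, abs_mul, abs_mul, Real.abs_exp,
        abs_neg, div_le_iff₀ hξ2]
      have h1 := trig_comb_bound' ξ (x*ξ)
      have h2 : (0:ℝ) ≤ |c| * Real.exp (-x) := by positivity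
      calc |c| * Real.exp (-x) * |Real.sin (x*ξ) + ξ*Real.cos (x*ξ)|
          ≤ |c| * Real.exp (-x) * (1+|ξ|) := by nlinarith
        _ = |c| * (1+|ξ|)/(1+ξ^2) * Real.exp (-x) * (1+ξ^2) := by field_simp
    · have h0 : Filter.Tendsto (fun x : ℝ => Real.exp (-x)) Filter.atTop (nhds 0) := by
        exact Real.tendsto_exp_atBot.comp Filter.tendsto_neg_atTop_atBot
      have := h0.const_mul (|c| * (1+|ξ|)/(1+ξ^2))
      simpa using this
  have := integral_Ioi_of_hasDerivAt_of_tendsto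
    ((hderiv q).continuousAt.continuousWithinAt)
    (fun x _ => hderiv x) hint htend
  rw [this, hφ]
  simp only []
  simp [Real.sin_neg, Real.cos_neg]
  try ring

lemma piece2 (c q ξ : ℝ) (hξ : ξ ≠ 0) :
    ∫ x in (-q)..q, c * x * Real.sin (x*ξ)
      = c * (2*Real.sin (q*ξ)/ξ^2 - 2*q*Real.cos (q*ξ)/ξ) := by
  set φ : ℝ → ℝ := fun x => c * (Real.sin (x*ξ)/ξ^2 - x*Real.cos (x*ξ)/ξ) with hφ
  have hderiv : ∀ x : ℝ, HasDerivAt φ (c * x * Real.sin (x*ξ)) x := by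
    intro x
    have hid : HasDerivAt (fun y : ℝ => y * ξ) ξ x := by
      simpa using (hasDerivAt_id x).mul_const ξ
    have hsin : HasDerivAt (fun y : ℝ => Real.sin (y*ξ)) (Real.cos (x*ξ) * ξ) x :=
      hid.sin
    have hcos : HasDerivAt (fun y : ℝ => Real.cos (y*ξ)) (-Real.sin (x*ξ) * ξ) x :=
      hid.cos
    have h1 : HasDerivAt (fun y : ℝ => y * Real.cos (y*ξ))
        (1 * Real.cos (x*ξ) + x * (-Real.sin (x*ξ) * ξ)) x := (hasDerivAt_id x).mul hcos
    have h2 := (((hsin.div_const (ξ^2)).sub (h1.div_const ξ)).const_mul c)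
    refine HasDerivAt.congr_deriv h2 ?_
    field_simp
    ring
  have hcont : Continuous (fun x : ℝ => c * x * Real.sin (x*ξ)) := by fun_prop
  rw [intervalIntegral.integral_eq_sub_of_hasDerivAt (fun x _ => hderiv x)
    (hcont.intervalIntegrable _ _), hφ]
  simp [Real.sin_neg, Real.cos_neg, neg_mul]
  ring

lemma integrable_v0_mul_bounded (p q : ℝ) (hp : 0 < p) (hq0 : 0 < q) (hq : q < 1/4)
    (g : ℝ → ℝ) (hg : Measurable g) (hb : ∀ x, |g x| ≤ 1) :
    Integrable (fun x => v0 p q x * g x) := by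
  apply Integrable.mono' (integrable_exp_neg_abs.const_mul (2*p*q))
  · exact ((v0_measurable p q).mul hg).aestronglyMeasurable
  · filter_upwards with x
    rw [Real.norm_eq_abs, abs_mul]
    have h1 := v0_abs_le p q hp hq0 hq x
    have h2 := hb x
    have h3 := mul_le_mul_of_nonneg_left h2 (abs_nonneg (v0 p q x))
    nlinarith [abs_nonneg (v0 p q x)]

lemma v0_eq_on_Iic (p q : ℝ) (hq0 : 0 < q) :
    ∀ x ∈ Iic (-q), v0 p q x = p*q*Real.exp x := by
  intro x hx
  by_cases h : x < -q
  · simp [v0, h]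
  · have hxq : x = -q := le_antisymm hx (not_lt.1 h)
    subst hxq
    simp only [v0, lt_irrefl, if_false, if_pos (by linarith : -q ≤ q)]
    ring

lemma v0_eq_on_Ioc (p q : ℝ) (hq0 : 0 < q) :
    ∀ x ∈ Ioc (-q) q, v0 p q x = -(p*Real.exp (-q))*x := by
  intro x hx
  have h1 : ¬ x < -q := not_lt.2 hx.1.le
  simp only [v0, h1, if_false, if_pos hx.2]
  ring

lemma v0_eq_on_Ioi (p q : ℝ) (hq0 : 0 < q) :
    ∀ x ∈ Ioi q, v0 p q x = -(p*q)*Real.exp (-x) := by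
  intro x hx
  have hx' : q < x := hx
  have h1 : ¬ x < -q := by push_neg; linarith
  have h2 : ¬ x ≤ q := not_le.2 hx'
  simp only [v0, h1, h2, if_false]
  ring

lemma sin_integral (p q : ℝ) (hp : 0 < p) (hq0 : 0 < q) (hq : q < 1/4) (ξ : ℝ) (hξ : ξ ≠ 0) :
    ∫ x : ℝ, v0 p q x * Real.sin (x*ξ) = -2*(p*Real.exp (-q)) * FF q ξ := by
  have hint : Integrable (fun x => v0 p q x * Real.sin (x*ξ)) :=
    integrable_v0_mul_bounded p q hp hq0 hq _ (by fun_prop)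
      (fun x => abs_le.2 ⟨Real.neg_one_le_sin _, Real.sin_le_one _⟩)
  rw [← intervalIntegral.integral_Iic_add_Ioi (b := -q) hint.integrableOn hint.integrableOn]
  have hsplit2 : (∫ x in Ioi (-q), v0 p q x * Real.sin (x*ξ))
      = (∫ x in Ioc (-q) q, v0 p q x * Real.sin (x*ξ))
        + ∫ x in Ioi q, v0 p q x * Real.sin (x*ξ) := by
    rw [← setIntegral_union (Set.Ioc_disjoint_Ioi le_rfl) measurableSet_Ioi
      hint.integrableOn hint.integrableOn, Set.Ioc_union_Ioi_eq_Ioi (by linarith : -q ≤ q)]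
  rw [hsplit2]
  have e1 : (∫ x in Iic (-q), v0 p q x * Real.sin (x*ξ))
      = ∫ x in Iic (-q), (p*q) * Real.exp x * Real.sin (x*ξ) := by
    apply setIntegral_congr_fun measurableSet_Iic
    intro x hx
    simp only []
    rw [v0_eq_on_Iic p q hq0 x hx]
  have e2 : (∫ x in Ioc (-q) q, v0 p q x * Real.sin (x*ξ))
      = ∫ x in Ioc (-q) q, (-(p*Real.exp (-q))) * x * Real.sin (x*ξ) := by
    apply setIntegral_congr_fun measurableSet_Ioc
    intro x hx
    simp only []
    rw [v0_eq_on_Ioc p q hq0 x hx]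
  have e3 : (∫ x in Ioi q, v0 p q x * Real.sin (x*ξ))
      = ∫ x in Ioi q, (-(p*q)) * Real.exp (-x) * Real.sin (x*ξ) := by
    apply setIntegral_congr_fun measurableSet_Ioi
    intro x hx
    simp only []
    rw [v0_eq_on_Ioi p q hq0 x hx]
  rw [e1, e2, e3, piece1, piece3,
    ← intervalIntegral.integral_of_le (by linarith : -q ≤ q), piece2 _ _ _ hξ]
  unfold FF
  rw [show -q*ξ = -(q*ξ) by ring, Real.sin_neg, Real.cos_neg]
  have h1 : (1:ℝ)+ξ^2 ≠ 0 := by positivity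
  field_simp
  ring

lemma cos_integral (p q : ℝ) (hp : 0 < p) (hq0 : 0 < q) (hq : q < 1/4) (ξ : ℝ) :
    ∫ x : ℝ, v0 p q x * Real.cos (x*ξ) = 0 := by
  have hodd : ∀ x : ℝ, v0 p q (-x) * Real.cos ((-x)*ξ) = -(v0 p q x * Real.cos (x*ξ)) := by
    intro x
    rw [v0_odd p q hq0, show (-x)*ξ = -(x*ξ) by ring, Real.cos_neg]
    ring
  have h1 : (∫ x : ℝ, v0 p q (-x) * Real.cos ((-x)*ξ)) = ∫ x : ℝ, v0 p q x * Real.cos (x*ξ) := by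
    have := integral_neg_eq_self (fun x : ℝ => v0 p q x * Real.cos (x*ξ)) volume
    simpa using this
  have h2 : (∫ x : ℝ, v0 p q (-x) * Real.cos ((-x)*ξ))
      = -∫ x : ℝ, v0 p q x * Real.cos (x*ξ) := by
    simp_rw [hodd]
    exact integral_neg _
  linarith



lemma fourier_eq (p q : ℝ) (hp : 0 < p) (hq0 : 0 < q) (hq : q < 1/4) (ξ : ℝ) (hξ : ξ ≠ 0) :
    fourierT (v0 p q) ξ = ((2*(p*Real.exp (-q)) * FF q ξ : ℝ) : ℂ) * Complex.I := by
  unfold fourierT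
  have key : ∀ x : ℝ, Complex.exp (-Complex.I * x * ξ) * ((v0 p q x : ℝ) : ℂ)
      = ((v0 p q x * Real.cos (x*ξ) : ℝ) : ℂ)
        + ((-(v0 p q x * Real.sin (x*ξ)) : ℝ) : ℂ) * Complex.I := by
    intro x
    have h1 : -Complex.I * x * ξ = ((-(x*ξ) : ℝ) : ℂ) * Complex.I := by push_cast; ring
    rw [h1, Complex.exp_mul_I, ← Complex.ofReal_cos, ← Complex.ofReal_sin,
      Real.cos_neg, Real.sin_neg]
    push_cast
    ring
  simp_rw [key]
  have hintcos : Integrable (fun x => v0 p q x * Real.cos (x*ξ)) :=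
    integrable_v0_mul_bounded p q hp hq0 hq _ (by fun_prop)
      (fun x => abs_le.2 ⟨Real.neg_one_le_cos _, Real.cos_le_one _⟩)
  have hintsin : Integrable (fun x => v0 p q x * Real.sin (x*ξ)) :=
    integrable_v0_mul_bounded p q hp hq0 hq _ (by fun_prop)
      (fun x => abs_le.2 ⟨Real.neg_one_le_sin _, Real.sin_le_one _⟩)
  have hi2 : Integrable (fun x => ((-(v0 p q x * Real.sin (x*ξ)) : ℝ) : ℂ) * Complex.I) := by
    have := (hintsin.neg.ofReal (𝕜 := ℂ)).mul_const Complex.I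
    simpa using this
  have step1 : (∫ x : ℝ, (((v0 p q x * Real.cos (x*ξ) : ℝ) : ℂ)
        + ((-(v0 p q x * Real.sin (x*ξ)) : ℝ) : ℂ) * Complex.I))
      = (∫ x : ℝ, ((v0 p q x * Real.cos (x*ξ) : ℝ) : ℂ))
        + ∫ x : ℝ, ((-(v0 p q x * Real.sin (x*ξ)) : ℝ) : ℂ) * Complex.I :=
    integral_add hintcos.ofReal hi2
  have step2 : (∫ x : ℝ, ((-(v0 p q x * Real.sin (x*ξ)) : ℝ) : ℂ) * Complex.I)
      = (∫ x : ℝ, ((-(v0 p q x * Real.sin (x*ξ)) : ℝ) : ℂ)) * Complex.I :=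
    integral_mul_const _ _
  have step3 : (∫ x : ℝ, ((v0 p q x * Real.cos (x*ξ) : ℝ) : ℂ))
      = ((∫ x : ℝ, v0 p q x * Real.cos (x*ξ) : ℝ) : ℂ) := integral_ofReal
  have step4 : (∫ x : ℝ, ((-(v0 p q x * Real.sin (x*ξ)) : ℝ) : ℂ))
      = ((∫ x : ℝ, -(v0 p q x * Real.sin (x*ξ)) : ℝ) : ℂ) := integral_ofReal
  rw [step1, step2, step3, step4, integral_neg, cos_integral p q hp hq0 hq ξ,
    sin_integral p q hp hq0 hq ξ hξ]
  push_cast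
  ring

noncomputable def hh (s p q : ℝ) : ℝ → ℝ :=
  fun t => t ^ (2*s) * (2*(p*Real.exp (-q)) * FF q t)^2

lemma abs_fourier (p q : ℝ) (hp : 0 < p) (hq0 : 0 < q) (hq : q < 1/4) (ξ : ℝ) (hξ : ξ ≠ 0) :
    ‖fourierT (v0 p q) ξ‖ = 2*(p*Real.exp (-q)) * |FF q ξ| := by
  rw [fourier_eq p q hp hq0 hq ξ hξ, norm_mul, Complex.norm_I, Complex.norm_real, Real.norm_eq_abs, mul_one,
    abs_mul, abs_of_pos (by positivity : (0:ℝ) < 2*(p*Real.exp (-q)))]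

lemma g_eq (s p q : ℝ) (hs : s ≠ 0) (hp : 0 < p) (hq0 : 0 < q) (hq : q < 1/4) (ξ : ℝ) :
    |ξ| ^ (2*s) * ‖fourierT (v0 p q) ξ‖^2 = hh s p q |ξ| := by
  rcases lt_trichotomy ξ 0 with h|h|h
  · rw [abs_of_neg h]
    unfold hh
    rw [abs_fourier p q hp hq0 hq ξ (ne_of_lt h), show -ξ = -ξ from rfl]
    rw [show FF q (-ξ) = -FF q ξ from FF_odd q ξ]
    rw [mul_pow, mul_pow, sq_abs]
    ring
  · subst h
    unfold hh
    simp [Real.zero_rpow (by simpa using hs : 2*s ≠ 0)]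
  · rw [abs_of_pos h]
    unfold hh
    rw [abs_fourier p q hp hq0 hq ξ (ne_of_gt h), mul_pow, mul_pow, sq_abs]
    ring


lemma FF_abs_le (q t : ℝ) (hq0 : 0 < q) (ht : 0 < t) :
    |FF q t| ≤ |Real.sin (q*t)| * (1/t^2 + q/(1+t^2))
      + q * |Real.cos (q*t)| / (t*(1+t^2)) := by
  have h1t : (0:ℝ) < 1 + t^2 := by positivity
  unfold FF
  refine (abs_sub _ _).trans ?_
  rw [abs_mul, abs_of_pos (by positivity : (0:ℝ) < 1/t^2 + q/(1+t^2)),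
    abs_div, abs_mul, abs_of_pos hq0, abs_of_pos (by positivity : (0:ℝ) < t*(1+t^2))]

lemma FF_bound1 (q t : ℝ) (hq0 : 0 < q) (hq : q < 1) (ht : 0 < t) : |FF q t| ≤ 3*q/t := by
  have h1t : (0:ℝ) < 1 + t^2 := by positivity
  have hs1 : |Real.sin (q*t)| ≤ q*t := by
    have h := Real.abs_sin_le_abs (x := q*t)
    calc |Real.sin (q*t)| ≤ |q*t| := h
      _ = q*t := abs_of_pos (by positivity)
  have hs2 : |Real.sin (q*t)| ≤ 1 := abs_le.2 ⟨Real.neg_one_le_sin _, Real.sin_le_one _⟩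
  have hcs : |Real.cos (q*t)| ≤ 1 := abs_le.2 ⟨Real.neg_one_le_cos _, Real.cos_le_one _⟩
  have e1 : |Real.sin (q*t)| * (1/t^2) ≤ q/t := by
    rw [mul_one_div, div_le_div_iff₀ (by positivity) ht]
    nlinarith [abs_nonneg (Real.sin (q*t))]
  have e2 : |Real.sin (q*t)| * (q/(1+t^2)) ≤ q/t := by
    rw [mul_div_assoc', div_le_div_iff₀ h1t ht]
    nlinarith [abs_nonneg (Real.sin (q*t)),
      mul_le_mul_of_nonneg_right hs2 (mul_pos hq0 ht).le, sq_nonneg (t-1),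
      mul_pos hq0 ht, mul_nonneg hq0.le (sq_nonneg (t-1))]
  have e3 : q * |Real.cos (q*t)| / (t*(1+t^2)) ≤ q/t := by
    rw [div_le_div_iff₀ (by positivity) ht]
    nlinarith [abs_nonneg (Real.cos (q*t)),
      mul_le_mul_of_nonneg_left hcs (mul_pos hq0 ht).le,
      mul_nonneg (mul_pos hq0 ht).le (sq_nonneg t)]
  have := FF_abs_le q t hq0 ht
  calc |FF q t| ≤ |Real.sin (q*t)| * (1/t^2 + q/(1+t^2))
      + q * |Real.cos (q*t)| / (t*(1+t^2)) := this
    _ ≤ q/t + q/t + q/t := by rw [mul_add]; gcongr <;> linarith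
    _ = 3*q/t := by ring

lemma FF_bound2 (q t : ℝ) (hq0 : 0 < q) (hq : q < 1) (ht : 0 < t) : |FF q t| ≤ 3/t^2 := by
  have h1t : (0:ℝ) < 1 + t^2 := by positivity
  have hs2 : |Real.sin (q*t)| ≤ 1 := abs_le.2 ⟨Real.neg_one_le_sin _, Real.sin_le_one _⟩
  have hcs : |Real.cos (q*t)| ≤ 1 := abs_le.2 ⟨Real.neg_one_le_cos _, Real.cos_le_one _⟩
  have e1 : |Real.sin (q*t)| * (1/t^2) ≤ 1/t^2 := by
    have := mul_le_mul_of_nonneg_right hs2 (by positivity : (0:ℝ) ≤ 1/t^2)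
    linarith
  have e2 : |Real.sin (q*t)| * (q/(1+t^2)) ≤ 1/t^2 := by
    rw [mul_div_assoc', div_le_div_iff₀ h1t (by positivity)]
    nlinarith [abs_nonneg (Real.sin (q*t)),
      mul_le_mul_of_nonneg_right hs2 (by positivity : (0:ℝ) ≤ q*t^2),
      mul_nonneg (by linarith : (0:ℝ) ≤ 1-q) (sq_nonneg t)]
  have e3 : q * |Real.cos (q*t)| / (t*(1+t^2)) ≤ 1/t^2 := by
    rw [div_le_div_iff₀ (by positivity) (by positivity)]
    nlinarith [abs_nonneg (Real.cos (q*t)),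
      mul_le_mul_of_nonneg_left hcs (by positivity : (0:ℝ) ≤ q*t^2),
      mul_nonneg (by linarith : (0:ℝ) ≤ 1-q) (sq_nonneg t),
      mul_nonneg (mul_nonneg (by linarith : (0:ℝ) ≤ 1-q) (sq_nonneg t)) ht.le,
      mul_nonneg (sq_nonneg (t-1)) ht.le]
  have := FF_abs_le q t hq0 ht
  calc |FF q t| ≤ |Real.sin (q*t)| * (1/t^2 + q/(1+t^2))
      + q * |Real.cos (q*t)| / (t*(1+t^2)) := this
    _ ≤ 1/t^2 + 1/t^2 + 1/t^2 := by rw [mul_add]; gcongr <;> linarith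
    _ = 3/t^2 := by ring

lemma FF_lower (q t : ℝ) (hq0 : 0 < q) (h1 : π/2 ≤ q*t) (h2 : q*t ≤ 3*π/4) (ht : 0 < t) :
    Real.sqrt 2/2 * (1/t^2) ≤ FF q t := by
  have hpi := Real.pi_pos
  have hsin : Real.sqrt 2/2 ≤ Real.sin (q*t) := by
    rw [← Real.sin_pi_sub]
    set y := π - q*t with hy
    have hy1 : π/4 ≤ y := by rw [hy]; linarith
    have hy2 : y ≤ π/2 := by rw [hy]; linarith
    rw [← Real.cos_pi_div_two_sub y]
    have := Real.cos_le_cos_of_nonneg_of_le_pi (by linarith : (0:ℝ) ≤ π/2 - y)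
      (by linarith : π/4 ≤ π) (by linarith : π/2 - y ≤ π/4)
    rwa [Real.cos_pi_div_four] at this
  have hcos : Real.cos (q*t) ≤ 0 :=
    Real.cos_nonpos_of_pi_div_two_le_of_le h1 (by linarith)
  have h1t : (0:ℝ) < 1 + t^2 := by positivity
  have hsqrt2 : (0:ℝ) < Real.sqrt 2 := by positivity
  have key : Real.sqrt 2/2 * (1/t^2) ≤ Real.sin (q*t) * (1/t^2 + q/(1+t^2)) := by
    apply mul_le_mul hsin (le_add_of_nonneg_right (by positivity)) (by positivity)
    linarith
  have hc2 : q * Real.cos (q*t) / (t*(1+t^2)) ≤ 0 :=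
    div_nonpos_of_nonpos_of_nonneg (mul_nonpos_of_nonneg_of_nonpos hq0.le hcos)
      (by positivity)
  unfold FF
  linarith

lemma hh_nonneg (s p q t : ℝ) (ht : 0 ≤ t) : 0 ≤ hh s p q t := by
  unfold hh
  exact mul_nonneg (Real.rpow_nonneg ht _) (sq_nonneg _)

lemma rpow_sub_nat (t : ℝ) (ht : 0 < t) (a : ℝ) (n : ℕ) : t ^ (a - n) = t ^ a / t ^ n := by
  rw [Real.rpow_sub ht, Real.rpow_natCast]

lemma hh_le1 (s p q t : ℝ) (hp : 0 < p) (hq0 : 0 < q) (hq : q < 1) (ht : 0 < t) :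
    hh s p q t ≤ 36*(p*Real.exp (-q))^2*q^2 * t^(2*s-2) := by
  have hb : (0:ℝ) < p*Real.exp (-q) := by positivity
  have hFF : FF q t^2 ≤ (3*q/t)^2 := by
    rw [← sq_abs]
    exact pow_le_pow_left₀ (abs_nonneg _) (FF_bound1 q t hq0 hq ht) 2
  have h2 : (2*(p*Real.exp (-q)) * FF q t)^2 ≤ 4*(p*Real.exp (-q))^2 * (9*q^2/t^2) := by
    have : (2*(p*Real.exp (-q)) * FF q t)^2 = 4*(p*Real.exp (-q))^2 * FF q t^2 := by ring
    rw [this]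
    have h3 : (3*q/t)^2 = 9*q^2/t^2 := by rw [div_pow]; ring_nf
    nlinarith [sq_nonneg (p*Real.exp (-q))]
  have := mul_le_mul_of_nonneg_left h2 (Real.rpow_nonneg ht.le (2*s))
  calc hh s p q t ≤ t^(2*s) * (4*(p*Real.exp (-q))^2 * (9*q^2/t^2)) := this
    _ = 36*(p*Real.exp (-q))^2*q^2 * (t^(2*s) / t^(2:ℕ)) := by ring
    _ = 36*(p*Real.exp (-q))^2*q^2 * t^(2*s-2) := by
        rw [← rpow_sub_nat t ht (2*s) 2]; norm_num

lemma hh_le2 (s p q t : ℝ) (hp : 0 < p) (hq0 : 0 < q) (hq : q < 1) (ht : 0 < t) :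
    hh s p q t ≤ 36*(p*Real.exp (-q))^2 * t^(2*s-4) := by
  have hFF : FF q t^2 ≤ (3/t^2)^2 := by
    rw [← sq_abs]
    exact pow_le_pow_left₀ (abs_nonneg _) (FF_bound2 q t hq0 hq ht) 2
  have h2 : (2*(p*Real.exp (-q)) * FF q t)^2 ≤ 4*(p*Real.exp (-q))^2 * (9/t^4) := by
    have he : (2*(p*Real.exp (-q)) * FF q t)^2 = 4*(p*Real.exp (-q))^2 * FF q t^2 := by ring
    rw [he]
    have h3 : (3/t^2)^2 = 9/t^4 := by rw [div_pow]; ring_nf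
    nlinarith [sq_nonneg (p*Real.exp (-q))]
  have := mul_le_mul_of_nonneg_left h2 (Real.rpow_nonneg ht.le (2*s))
  calc hh s p q t ≤ t^(2*s) * (4*(p*Real.exp (-q))^2 * (9/t^4)) := this
    _ = 36*(p*Real.exp (-q))^2 * (t^(2*s) / t^(4:ℕ)) := by ring
    _ = 36*(p*Real.exp (-q))^2 * t^(2*s-4) := by
        rw [← rpow_sub_nat t ht (2*s) 4]; norm_num

lemma hh_lower (s p q t : ℝ) (hq0 : 0 < q) (h1 : π/2 ≤ q*t) (h2 : q*t ≤ 3*π/4) (ht : 0 < t) :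
    2*(p*Real.exp (-q))^2 * t^(2*s-4) ≤ hh s p q t := by
  have hFFpos : 0 ≤ FF q t := le_trans (by positivity) (FF_lower q t hq0 h1 h2 ht)
  have hFF2 : (Real.sqrt 2/2 * (1/t^2))^2 ≤ FF q t^2 :=
    pow_le_pow_left₀ (by positivity) (FF_lower q t hq0 h1 h2 ht) 2
  have hsq : (Real.sqrt 2/2 * (1/t^2))^2 = (1/2) / t^4 := by
    rw [mul_pow, div_pow, Real.sq_sqrt (by norm_num : (0:ℝ) ≤ 2), div_pow, one_pow]
    ring_nf
  have h3 : 2*(p*Real.exp (-q))^2 / t^4 ≤ (2*(p*Real.exp (-q)) * FF q t)^2 := by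
    have he : (2*(p*Real.exp (-q)) * FF q t)^2 = 4*(p*Real.exp (-q))^2 * FF q t^2 := by ring
    rw [he]
    rw [hsq] at hFF2
    have := mul_le_mul_of_nonneg_left hFF2 (by positivity : (0:ℝ) ≤ 4*(p*Real.exp (-q))^2)
    calc 2*(p*Real.exp (-q))^2 / t^4 = 4*(p*Real.exp (-q))^2 * ((1/2)/t^4) := by ring
      _ ≤ 4*(p*Real.exp (-q))^2 * FF q t^2 := this
  have := mul_le_mul_of_nonneg_left h3 (Real.rpow_nonneg ht.le (2*s))
  calc 2*(p*Real.exp (-q))^2 * t^(2*s-4)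
      = t^(2*s) * (2*(p*Real.exp (-q))^2 / t^(4:ℕ)) := by
        rw [show (2*s-4 : ℝ) = 2*s - (4:ℕ) by push_cast; ring, rpow_sub_nat t ht (2*s) 4]
        ring
    _ ≤ t^(2*s) * (2*(p*Real.exp (-q)) * FF q t)^2 := this
    _ = hh s p q t := rfl


lemma hh_measurable (s p q : ℝ) : Measurable (hh s p q) := by
  unfold hh FF
  fun_prop

lemma integrableOn_hh_Ioc (s p q : ℝ) (hs : 1/2 < s) (hp : 0 < p) (hq0 : 0 < q)
    (hq : q < 1) : IntegrableOn (hh s p q) (Ioc 0 (1/q)) := by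
  have hmaj : IntegrableOn (fun t : ℝ => 36*(p*Real.exp (-q))^2*q^2 * t^(2*s-2))
      (Ioc 0 (1/q)) := by
    have h1 : IntervalIntegrable (fun t : ℝ => t^(2*s-2)) volume 0 (1/q) :=
      intervalIntegral.intervalIntegrable_rpow' (by linarith)
    have h2 := (intervalIntegrable_iff_integrableOn_Ioc_of_le (by positivity : (0:ℝ) ≤ 1/q)).1 h1
    exact h2.const_mul _
  apply Integrable.mono' hmaj ((hh_measurable s p q).aestronglyMeasurable.restrict)
  filter_upwards [ae_restrict_mem measurableSet_Ioc] with t ht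
  rw [Real.norm_eq_abs, abs_of_nonneg (hh_nonneg s p q t ht.1.le)]
  exact hh_le1 s p q t hp hq0 hq ht.1

lemma integrableOn_hh_Ioi (s p q : ℝ) (hs : s < 3/2) (hp : 0 < p) (hq0 : 0 < q)
    (hq : q < 1) : IntegrableOn (hh s p q) (Ioi (1/q)) := by
  have hmaj : IntegrableOn (fun t : ℝ => 36*(p*Real.exp (-q))^2 * t^(2*s-4)) (Ioi (1/q)) :=
    (integrableOn_Ioi_rpow_of_lt (by linarith) (by positivity)).const_mul _
  apply Integrable.mono' hmaj ((hh_measurable s p q).aestronglyMeasurable.restrict)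
  filter_upwards [ae_restrict_mem measurableSet_Ioi] with t ht
  have ht0 : 0 < t := lt_trans (by positivity) ht
  rw [Real.norm_eq_abs, abs_of_nonneg (hh_nonneg s p q t ht0.le)]
  exact hh_le2 s p q t hp hq0 hq ht0

lemma integrableOn_hh (s p q : ℝ) (hs : 1/2 < s) (hs2 : s < 3/2) (hp : 0 < p) (hq0 : 0 < q)
    (hq : q < 1) : IntegrableOn (hh s p q) (Ioi 0) := by
  rw [← Set.Ioc_union_Ioi_eq_Ioi (by positivity : (0:ℝ) ≤ 1/q)]
  exact (integrableOn_hh_Ioc s p q hs hp hq0 hq).union (integrableOn_hh_Ioi s p q hs2 hp hq0 hq)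

lemma q_rpow_aux1 (s q : ℝ) (hq0 : 0 < q) : q^2 * (1/q)^(2*s-1) = q^(3-2*s) := by
  rw [one_div, ← Real.rpow_neg_one q, ← Real.rpow_natCast q 2,
    ← Real.rpow_mul hq0.le, ← Real.rpow_add hq0]
  norm_num
  ring_nf

lemma q_rpow_aux2 (s q : ℝ) (hq0 : 0 < q) : (1/q)^(2*s-3) = q^(3-2*s) := by
  rw [one_div, ← Real.rpow_neg_one q, ← Real.rpow_mul hq0.le]
  ring_nf

lemma integral_hh_le (s p q : ℝ) (hs : 1/2 < s) (hs2 : s < 3/2) (hp : 0 < p) (hq0 : 0 < q)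
    (hq : q < 1) :
    ∫ t in Ioi (0:ℝ), hh s p q t
      ≤ 36*p^2*(1/(2*s-1) + 1/(3-2*s)) * q^(3-2*s) := by
  have hb : (0:ℝ) < p*Real.exp (-q) := by positivity
  have hbp : p*Real.exp (-q) ≤ p := by
    nlinarith [Real.exp_le_one_iff.2 (by linarith : -q ≤ (0:ℝ)), Real.exp_pos (-q)]
  have hsplit : (∫ t in Ioi (0:ℝ), hh s p q t)
      = (∫ t in Ioc (0:ℝ) (1/q), hh s p q t) + ∫ t in Ioi (1/q), hh s p q t := by
    rw [← setIntegral_union (Set.Ioc_disjoint_Ioi le_rfl) measurableSet_Ioi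
      (integrableOn_hh_Ioc s p q hs hp hq0 hq) (integrableOn_hh_Ioi s p q hs2 hp hq0 hq),
      Set.Ioc_union_Ioi_eq_Ioi (by positivity : (0:ℝ) ≤ 1/q)]
  have hI1 : (∫ t in Ioc (0:ℝ) (1/q), hh s p q t)
      ≤ 36*(p*Real.exp (-q))^2*q^2 * ((1/q)^(2*s-1)/(2*s-1)) := by
    have hmono : (∫ t in Ioc (0:ℝ) (1/q), hh s p q t)
        ≤ ∫ t in Ioc (0:ℝ) (1/q), 36*(p*Real.exp (-q))^2*q^2 * t^(2*s-2) := by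
      apply setIntegral_mono_on (integrableOn_hh_Ioc s p q hs hp hq0 hq)
        (((intervalIntegrable_iff_integrableOn_Ioc_of_le
          (by positivity : (0:ℝ) ≤ 1/q)).1 (intervalIntegral.intervalIntegrable_rpow' (by linarith))).const_mul _)
        measurableSet_Ioc
      intro t ht
      exact hh_le1 s p q t hp hq0 hq ht.1
    have hval : (∫ t in Ioc (0:ℝ) (1/q), t^(2*s-2)) = (1/q)^(2*s-1)/(2*s-1) := by
      rw [← intervalIntegral.integral_of_le (by positivity : (0:ℝ) ≤ 1/q),
        integral_rpow (Or.inl (by linarith))]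
      rw [Real.zero_rpow (by linarith : 2*s-2+1 ≠ 0)]
      norm_num
      ring_nf
    calc (∫ t in Ioc (0:ℝ) (1/q), hh s p q t)
        ≤ ∫ t in Ioc (0:ℝ) (1/q), 36*(p*Real.exp (-q))^2*q^2 * t^(2*s-2) := hmono
      _ = 36*(p*Real.exp (-q))^2*q^2 * ∫ t in Ioc (0:ℝ) (1/q), t^(2*s-2) :=
          integral_const_mul _ _
      _ = 36*(p*Real.exp (-q))^2*q^2 * ((1/q)^(2*s-1)/(2*s-1)) := by rw [hval]
  have hI2 : (∫ t in Ioi (1/q), hh s p q t)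
      ≤ 36*(p*Real.exp (-q))^2 * ((1/q)^(2*s-3)/(3-2*s)) := by
    have hmono : (∫ t in Ioi (1/q), hh s p q t)
        ≤ ∫ t in Ioi (1/q), 36*(p*Real.exp (-q))^2 * t^(2*s-4) := by
      apply setIntegral_mono_on (integrableOn_hh_Ioi s p q hs2 hp hq0 hq)
        ((integrableOn_Ioi_rpow_of_lt (by linarith) (by positivity)).const_mul _)
        measurableSet_Ioi
      intro t ht
      exact hh_le2 s p q t hp hq0 hq (lt_trans (by positivity) ht)
    have hval : (∫ t in Ioi (1/q), t^(2*s-4)) = (1/q)^(2*s-3)/(3-2*s) := by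
      rw [integral_Ioi_rpow_of_lt (by linarith) (by positivity)]
      rw [show (2*s-4+1 : ℝ) = 2*s-3 by ring]
      rw [div_eq_div_iff (by linarith) (by linarith)]
      ring
    calc (∫ t in Ioi (1/q), hh s p q t)
        ≤ ∫ t in Ioi (1/q), 36*(p*Real.exp (-q))^2 * t^(2*s-4) := hmono
      _ = 36*(p*Real.exp (-q))^2 * ∫ t in Ioi (1/q), t^(2*s-4) := integral_const_mul _ _
      _ = 36*(p*Real.exp (-q))^2 * ((1/q)^(2*s-3)/(3-2*s)) := by rw [hval]
  rw [hsplit]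
  have e1 : 36*(p*Real.exp (-q))^2*q^2 * ((1/q)^(2*s-1)/(2*s-1))
      ≤ 36*p^2 * (1/(2*s-1)) * q^(3-2*s) := by
    have hq1 : q^2 * (1/q)^(2*s-1) = q^(3-2*s) := q_rpow_aux1 s q hq0
    have hrp : (0:ℝ) ≤ (1/q)^(2*s-1) := Real.rpow_nonneg (by positivity) _
    have hb2 : (p*Real.exp (-q))^2 ≤ p^2 := by nlinarith [hb]
    calc 36*(p*Real.exp (-q))^2*q^2 * ((1/q)^(2*s-1)/(2*s-1))
        = 36*(p*Real.exp (-q))^2 * (q^2 * (1/q)^(2*s-1)) * (1/(2*s-1)) := by ring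
      _ = 36*(p*Real.exp (-q))^2 * q^(3-2*s) * (1/(2*s-1)) := by rw [hq1]
      _ ≤ 36*p^2 * q^(3-2*s) * (1/(2*s-1)) := by
          have h1 : (0:ℝ) ≤ q^(3-2*s) := Real.rpow_nonneg hq0.le _
          have h2 : (0:ℝ) ≤ 1/(2*s-1) := (div_pos one_pos (by linarith)).le
          nlinarith [mul_le_mul_of_nonneg_right hb2 (mul_nonneg h1 h2)]
      _ = 36*p^2 * (1/(2*s-1)) * q^(3-2*s) := by ring
  have e2 : 36*(p*Real.exp (-q))^2 * ((1/q)^(2*s-3)/(3-2*s))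
      ≤ 36*p^2 * (1/(3-2*s)) * q^(3-2*s) := by
    have hq2 : (1/q)^(2*s-3) = q^(3-2*s) := q_rpow_aux2 s q hq0
    have hb2 : (p*Real.exp (-q))^2 ≤ p^2 := by nlinarith [hb]
    rw [hq2]
    have h1 : (0:ℝ) ≤ q^(3-2*s) := Real.rpow_nonneg hq0.le _
    have h2 : (0:ℝ) ≤ 1/(3-2*s) := (div_pos one_pos (by linarith)).le
    calc 36*(p*Real.exp (-q))^2 * (q^(3-2*s)/(3-2*s))
        = 36*(p*Real.exp (-q))^2 * q^(3-2*s) * (1/(3-2*s)) := by ring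
      _ ≤ 36*p^2 * q^(3-2*s) * (1/(3-2*s)) := by
          nlinarith [mul_le_mul_of_nonneg_right hb2 (mul_nonneg h1 h2)]
      _ = 36*p^2 * (1/(3-2*s)) * q^(3-2*s) := by ring
  calc (∫ t in Ioc (0:ℝ) (1/q), hh s p q t) + ∫ t in Ioi (1/q), hh s p q t
      ≤ 36*(p*Real.exp (-q))^2*q^2 * ((1/q)^(2*s-1)/(2*s-1))
        + 36*(p*Real.exp (-q))^2 * ((1/q)^(2*s-3)/(3-2*s)) := add_le_add hI1 hI2
    _ ≤ 36*p^2 * (1/(2*s-1)) * q^(3-2*s) + 36*p^2 * (1/(3-2*s)) * q^(3-2*s) :=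
        add_le_add e1 e2
    _ = 36*p^2*(1/(2*s-1) + 1/(3-2*s)) * q^(3-2*s) := by ring


lemma integral_hh_ge (s p q : ℝ) (hs : 1/2 < s) (hs2 : s < 3/2) (hp : 0 < p) (hq0 : 0 < q)
    (hq : q < 1/4) :
    (9*π/32) * (3*π/4)^(2*s-4) * p^2 * q^(3-2*s) ≤ ∫ t in Ioi (0:ℝ), hh s p q t := by
  have hpi := Real.pi_pos
  set A := π/(2*q) with hA
  set B := 3*π/(4*q) with hB
  have hA0 : 0 < A := by rw [hA]; positivity
  have hB0 : 0 < B := by rw [hB]; positivity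
  have hAB : A ≤ B := by
    rw [hA, hB, div_le_div_iff₀ (by positivity) (by positivity)]
    nlinarith
  have hq1 : q < 1 := by linarith
  have hint : IntegrableOn (hh s p q) (Ioi 0) := integrableOn_hh s p q hs hs2 hp hq0 hq1
  have hsub : Icc A B ⊆ Ioi (0:ℝ) := fun x hx => lt_of_lt_of_le hA0 hx.1
  -- constant lower bound on Icc A B
  set c : ℝ := 2*(p*Real.exp (-q))^2 * B^(2*s-4) with hc
  have hconst : ∀ x ∈ Icc A B, c ≤ hh s p q x := by
    intro x hx
    have hx0 : 0 < x := hsub hx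
    have hqx1 : π/2 ≤ q*x := by
      have h := hx.1
      rw [hA, div_le_iff₀ (by positivity : (0:ℝ) < 2*q)] at h
      linarith
    have hqx2 : q*x ≤ 3*π/4 := by
      have h := hx.2
      rw [hB, le_div_iff₀ (by positivity : (0:ℝ) < 4*q)] at h
      linarith
    have h1 := hh_lower s p q x hq0 hqx1 hqx2 hx0
    have h2 : B^(2*s-4) ≤ x^(2*s-4) :=
      Real.rpow_le_rpow_of_nonpos hx0 hx.2 (by linarith)
    have h3 : (0:ℝ) ≤ 2*(p*Real.exp (-q))^2 := by positivity
    calc c ≤ 2*(p*Real.exp (-q))^2 * x^(2*s-4) := by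
          rw [hc]; exact mul_le_mul_of_nonneg_left h2 h3
      _ ≤ hh s p q x := h1
  have hIcc : IntegrableOn (hh s p q) (Icc A B) := hint.mono_set hsub
  have hvol : (volume (Icc A B)).toReal = π/(4*q) := by
    rw [Real.volume_Icc, ENNReal.toReal_ofReal (by linarith)]
    rw [hB, hA]
    field_simp
    ring
  have hge := setIntegral_ge_of_const_le measurableSet_Icc
    (by rw [Real.volume_Icc]; exact ENNReal.ofReal_ne_top) hconst hIcc
  rw [measureReal_def, hvol, smul_eq_mul] at hge
  have hmono : (∫ t in Icc A B, hh s p q t) ≤ ∫ t in Ioi (0:ℝ), hh s p q t := by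
    apply setIntegral_mono_set hint
    · filter_upwards [ae_restrict_mem measurableSet_Ioi] with t ht
      exact hh_nonneg s p q t (le_of_lt ht)
    · exact HasSubset.Subset.eventuallyLE hsub
  -- algebra: c * (π/(4q)) ≥ claimed bound
  have hBval : B^(2*s-4) = (3*π/4)^(2*s-4) * q^(4-2*s) := by
    have : B = (3*π/4) / q := by rw [hB]; ring
    rw [this, Real.div_rpow (by positivity) hq0.le, div_eq_mul_inv,
      ← Real.rpow_neg hq0.le]
    ring_nf
  have hbp : (3/4)*p ≤ p*Real.exp (-q) := by
    have h1 : 1 - q ≤ Real.exp (-q) := by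
      have := Real.add_one_le_exp (-q)
      linarith
    nlinarith
  have hcge : (9*π/32) * (3*π/4)^(2*s-4) * p^2 * q^(3-2*s) ≤ c * (π/(4*q)) := by
    rw [hc, hBval]
    have h1 : (9/16)*p^2 ≤ (p*Real.exp (-q))^2 := by nlinarith [Real.exp_pos (-q)]
    have h2 : (0:ℝ) ≤ (3*π/4)^(2*s-4) := Real.rpow_nonneg (by positivity) _
    have h3 : (0:ℝ) ≤ q^(4-2*s) := Real.rpow_nonneg hq0.le _
    have h4 : q^(4-2*s) * (1/q) = q^(3-2*s) := by
      rw [one_div, ← Real.rpow_neg_one q, ← Real.rpow_add hq0]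
      ring_nf
    calc (9*π/32) * (3*π/4)^(2*s-4) * p^2 * q^(3-2*s)
        = 2*((9/16)*p^2) * ((3*π/4)^(2*s-4) * (q^(4-2*s) * (1/q))) * (π/4) := by
          rw [h4]; ring
      _ ≤ 2*(p*Real.exp (-q))^2 * ((3*π/4)^(2*s-4) * (q^(4-2*s) * (1/q))) * (π/4) := by
          have h5 : (0:ℝ) ≤ (3*π/4)^(2*s-4) * (q^(4-2*s) * (1/q)) := by positivity
          nlinarith [mul_le_mul_of_nonneg_right h1 h5]
      _ = 2*(p*Real.exp (-q))^2 * ((3*π/4)^(2*s-4) * q^(4-2*s)) * (π/(4*q)) := by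
          field_simp
  linarith



lemma integral_exp_neg_abs_eq : (∫ x : ℝ, Real.exp (-|x|)) = 2 := by
  rw [integral_comp_abs (f := fun t => Real.exp (-t))]
  rw [integral_exp_neg_Ioi_zero]; norm_num

lemma l2_bound (p q : ℝ) (hp : 0 < p) (hq0 : 0 < q) (hq : q < 1/4) :
    ∫ x : ℝ, (v0 p q x)^2 ≤ 8*p^2*q^2 := by
  have hptw : ∀ x : ℝ, (v0 p q x)^2 ≤ 4*p^2*q^2 * Real.exp (-|x|) := by
    intro x
    have h1 := v0_abs_le p q hp hq0 hq x
    have h2 : (v0 p q x)^2 ≤ (2*p*q*Real.exp (-|x|))^2 := by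
      rw [← sq_abs]
      exact pow_le_pow_left₀ (abs_nonneg _) h1 2
    have h3 : Real.exp (-|x|) ≤ 1 := Real.exp_le_one_iff.2 (by simp [abs_nonneg])
    have h4 : (0:ℝ) < Real.exp (-|x|) := Real.exp_pos _
    nlinarith [sq_nonneg (p*q)]
  have hint : Integrable (fun x : ℝ => (v0 p q x)^2) := by
    apply Integrable.mono' (integrable_exp_neg_abs.const_mul (4*p^2*q^2))
    · exact ((v0_measurable p q).pow_const 2).aestronglyMeasurable
    · filter_upwards with x
      rw [Real.norm_eq_abs, abs_of_nonneg (sq_nonneg _)]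
      exact hptw x
  calc ∫ x : ℝ, (v0 p q x)^2 ≤ ∫ x : ℝ, 4*p^2*q^2 * Real.exp (-|x|) :=
        integral_mono hint (integrable_exp_neg_abs.const_mul _) hptw
    _ = 4*p^2*q^2 * ∫ x : ℝ, Real.exp (-|x|) := integral_const_mul _ _
    _ = 8*p^2*q^2 := by rw [integral_exp_neg_abs_eq]; ring

lemma fourier_part_eq (s p q : ℝ) (hs : 0 < s) (hp : 0 < p) (hq0 : 0 < q) (hq : q < 1/4) :
    (∫ ξ : ℝ, |ξ| ^ (2*s) * ‖fourierT (v0 p q) ξ‖^2)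
      = 2 * ∫ t in Ioi (0:ℝ), hh s p q t := by
  have h1 : (fun ξ : ℝ => |ξ| ^ (2*s) * ‖fourierT (v0 p q) ξ‖^2)
      = fun ξ : ℝ => hh s p q |ξ| := funext (g_eq s p q (ne_of_gt hs) hp hq0 hq)
  rw [h1, integral_comp_abs (f := hh s p q)]

lemma sqrt_rpow_half (q : ℝ) (hq0 : 0 ≤ q) (a : ℝ) :
    Real.sqrt (q^(2*a)) = q^a := by
  rw [Real.sqrt_eq_rpow, ← Real.rpow_mul hq0]
  congr 1
  ring

theorem v0_Hs_norm (s : ℝ) (hs : s ∈ Set.Ioo (1 / 2 : ℝ) (3 / 2)) :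
    ∃ C > 0, ∀ p q : ℝ, 0 < p → q ∈ Set.Ioo (0 : ℝ) (1 / 4) →
      C⁻¹ * (p * q ^ ((3 : ℝ) / 2 - s)) ≤ HsNorm s (v0 p q) ∧
        HsNorm s (v0 p q) ≤ C * (p * q ^ ((3 : ℝ) / 2 - s)) := by
  obtain ⟨hs1, hs2⟩ := hs
  have hpi := Real.pi_pos
  set K : ℝ := 36*(1/(2*s-1) + 1/(3-2*s)) with hK
  have hKpos : 0 < K := by
    have h1 : (0:ℝ) < 1/(2*s-1) := div_pos one_pos (by linarith)
    have h2 : (0:ℝ) < 1/(3-2*s) := div_pos one_pos (by linarith)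
    rw [hK]; nlinarith
  set cL : ℝ := 2*((9*π/32) * (3*π/4)^(2*s-4)) with hcL
  have hcL0 : 0 < cL := by
    have h1 : (0:ℝ) < (3*π/4)^(2*s-4) := Real.rpow_pos_of_pos (by positivity) _
    rw [hcL]; positivity
  have hsC : 0 < Real.sqrt cL := Real.sqrt_pos.2 hcL0
  refine ⟨(3 + Real.sqrt (2*K)) + (Real.sqrt cL)⁻¹, by positivity, ?_⟩
  intro p q hp hqI
  obtain ⟨hq0, hq4⟩ := hqI
  have hq1 : q < 1 := by linarith
  have hqr : (0:ℝ) < q^((3:ℝ)/2-s) := Real.rpow_pos_of_pos hq0 _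
  -- L² term
  have hL2nonneg : 0 ≤ ∫ x : ℝ, v0 p q x ^ 2 := integral_nonneg fun x => sq_nonneg _
  have hL2 : Real.sqrt (∫ x : ℝ, v0 p q x ^ 2) ≤ 3*p*q := by
    have h9 : (∫ x : ℝ, v0 p q x ^ 2) ≤ (3*p*q)^2 := by
      have := l2_bound p q hp hq0 hq4
      nlinarith [mul_pos hp hq0]
    calc Real.sqrt (∫ x : ℝ, v0 p q x ^ 2) ≤ Real.sqrt ((3*p*q)^2) := Real.sqrt_le_sqrt h9
      _ = 3*p*q := Real.sqrt_sq (by positivity)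
  -- Fourier term
  have hFeq := fourier_part_eq s p q (by linarith) hp hq0 hq4
  have hFle : (∫ ξ : ℝ, |ξ| ^ (2*s) * ‖fourierT (v0 p q) ξ‖^2)
      ≤ 2*K * (p^2 * q^(3-2*s)) := by
    rw [hFeq]
    have := integral_hh_le s p q hs1 hs2 hp hq0 hq1
    rw [hK]
    nlinarith
  have hFge : cL * (p^2 * q^(3-2*s))
      ≤ ∫ ξ : ℝ, |ξ| ^ (2*s) * ‖fourierT (v0 p q) ξ‖^2 := by
    rw [hFeq]
    have := integral_hh_ge s p q hs1 hs2 hp hq0 hq4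
    rw [hcL]
    nlinarith
  have hq3s : Real.sqrt (q^(3-2*s)) = q^((3:ℝ)/2-s) := by
    rw [show (3-2*s : ℝ) = 2*((3:ℝ)/2-s) by ring]
    exact sqrt_rpow_half q hq0.le _
  have hsqprod : ∀ c : ℝ, 0 ≤ c →
      Real.sqrt (c * (p^2 * q^(3-2*s))) = Real.sqrt c * (p * q^((3:ℝ)/2-s)) := by
    intro c hc
    rw [Real.sqrt_mul hc, Real.sqrt_mul (sq_nonneg p), Real.sqrt_sq hp.le, hq3s]
  have hFnonneg : 0 ≤ ∫ ξ : ℝ, |ξ| ^ (2*s) * ‖fourierT (v0 p q) ξ‖^2 :=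
    integral_nonneg fun ξ => mul_nonneg (Real.rpow_nonneg (abs_nonneg _) _) (sq_nonneg _)
  have hsqF_le : Real.sqrt (∫ ξ : ℝ, |ξ| ^ (2*s) * ‖fourierT (v0 p q) ξ‖^2)
      ≤ Real.sqrt (2*K) * (p * q^((3:ℝ)/2-s)) := by
    rw [← hsqprod (2*K) (by positivity)]
    exact Real.sqrt_le_sqrt hFle
  have hsqF_ge : Real.sqrt cL * (p * q^((3:ℝ)/2-s))
      ≤ Real.sqrt (∫ ξ : ℝ, |ξ| ^ (2*s) * ‖fourierT (v0 p q) ξ‖^2) := by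
    rw [← hsqprod cL hcL0.le]
    exact Real.sqrt_le_sqrt hFge
  have hqq : q ≤ q^((3:ℝ)/2-s) := by
    have := Real.rpow_le_rpow_of_exponent_ge hq0 hq1.le (by linarith : (3:ℝ)/2-s ≤ 1)
    rwa [Real.rpow_one] at this
  constructor
  · -- lower bound
    have hCinv : ((3 + Real.sqrt (2*K)) + (Real.sqrt cL)⁻¹)⁻¹ ≤ Real.sqrt cL := by
      have h1 : (Real.sqrt cL)⁻¹ ≤ (3 + Real.sqrt (2*K)) + (Real.sqrt cL)⁻¹ := by
        have := Real.sqrt_nonneg (2*K)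
        linarith
      have h2 := one_div_le_one_div_of_le (by positivity : (0:ℝ) < (Real.sqrt cL)⁻¹) h1
      rw [one_div, one_div, inv_inv] at h2
      exact h2
    calc ((3 + Real.sqrt (2*K)) + (Real.sqrt cL)⁻¹)⁻¹ * (p * q^((3:ℝ)/2-s))
        ≤ Real.sqrt cL * (p * q^((3:ℝ)/2-s)) :=
          mul_le_mul_of_nonneg_right hCinv (mul_pos hp hqr).le
      _ ≤ Real.sqrt (∫ ξ : ℝ, |ξ| ^ (2*s) * ‖fourierT (v0 p q) ξ‖^2) := hsqF_ge
      _ ≤ HsNorm s (v0 p q) := by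
          have h := Real.sqrt_nonneg (∫ x : ℝ, v0 p q x ^ 2)
          unfold HsNorm
          linarith
  · -- upper bound
    have step : HsNorm s (v0 p q) ≤ 3*p*q + Real.sqrt (2*K) * (p * q^((3:ℝ)/2-s)) := by
      unfold HsNorm
      exact add_le_add hL2 hsqF_le
    have h3pq : 3*p*q ≤ 3 * (p * q^((3:ℝ)/2-s)) := by
      have := mul_le_mul_of_nonneg_left hqq hp.le
      nlinarith
    calc HsNorm s (v0 p q) ≤ 3*p*q + Real.sqrt (2*K) * (p * q^((3:ℝ)/2-s)) := step
      _ ≤ 3 * (p * q^((3:ℝ)/2-s)) + Real.sqrt (2*K) * (p * q^((3:ℝ)/2-s)) := by linarith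
      _ = (3 + Real.sqrt (2*K)) * (p * q^((3:ℝ)/2-s)) := by ring
      _ ≤ ((3 + Real.sqrt (2*K)) + (Real.sqrt cL)⁻¹) * (p * q^((3:ℝ)/2-s)) := by
          apply mul_le_mul_of_nonneg_right _ (mul_pos hp hqr).le
          have : (0:ℝ) ≤ (Real.sqrt cL)⁻¹ := inv_nonneg.2 (Real.sqrt_nonneg _)
          linarith
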